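/- arXiv:1703.08049 — 2 statements merged into one kernel-verified Lean document; each statement's English description precedes it below -/
import Mathlib

section
/- Let t^0_1 ≤ t^0_2 ≤ ... ≤ t^0_n and t^1_1 ≥ t^1_2 ≥ ... ≥ t^1_n be real sequences. Then the identity permutation minimizes over all permutations σ of {1,...,n} the quantity max_i |t^0_i + t^1_{σ(i)}|; i.e., min over σ of max_i |t^0_i + t^1_{σ(i)}| equals max_i |t^0_i + t^1_i|. -/
theorem stmt_0 {n : ℕ} [NeZero n] (t0 t1 : Fin n → ℝ)
    (h0 : Monotone t0) (h1 : Antitone t1)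
    (h0n : ∀ i, 0 ≤ t0 i) (h1n : ∀ i, 0 ≤ t1 i) :
    (Finset.univ.inf' Finset.univ_nonempty
        (fun σ : Equiv.Perm (Fin n) =>
          Finset.univ.sup' Finset.univ_nonempty (fun i => |t0 i + t1 (σ i)|)))
      = Finset.univ.sup' Finset.univ_nonempty (fun i => |t0 i + t1 i|) := by
  have habs : ∀ (f : Fin n → Fin n) (i : Fin n), |t0 i + t1 (f i)| = t0 i + t1 (f i) :=
    fun f i => abs_of_nonneg (add_nonneg (h0n i) (h1n _))
  apply le_antisymm
  · have := Finset.inf'_le (b := (1 : Equiv.Perm (Fin n)))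
      (fun σ : Equiv.Perm (Fin n) =>
        Finset.univ.sup' Finset.univ_nonempty (fun i => |t0 i + t1 (σ i)|))
      (Finset.mem_univ _)
    simpa only [Equiv.Perm.one_apply] using this
  · apply Finset.le_inf'
    intro σ _
    apply Finset.sup'_le
    intro j _
    obtain ⟨i, hij, hσ⟩ : ∃ i, j ≤ i ∧ σ i ≤ j := by
      by_contra h
      push_neg at h
      have hmaps : ∀ i ∈ Finset.Ici j, σ i ∈ Finset.Ioi j := by
        intro i hi
        simp only [Finset.mem_Ici] at hi
        simpa using h i hi
      have hcard := Finset.card_le_card_of_injOn σ hmaps (σ.injective.injOn)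
      rw [Fin.card_Ici, Fin.card_Ioi] at hcard
      omega
    calc |t0 j + t1 j| = t0 j + t1 j := abs_of_nonneg (add_nonneg (h0n j) (h1n j))
      _ ≤ t0 i + t1 (σ i) := add_le_add (h0 hij) (h1 hσ)
      _ = |t0 i + t1 (σ i)| := (habs σ i).symm
      _ ≤ _ := Finset.le_sup' (fun i => |t0 i + t1 (σ i)|) (Finset.mem_univ i)
end

section
/- Let σ minimize over permutations the bottleneck cost max_i (t^0_i + t^1_{σ(i)}), where t^0 is nondecreasing. Let k be an index at which i ↦ t^1_{σ(i)} attains its maximum over {1,...,n}. Then σ ∘ swap(1, k) is also a minimizer. -/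
theorem stmt_10 {n : ℕ} [NeZero n] (t0 t1 : Fin n → ℝ) (h0 : Monotone t0)
    (σ : Equiv.Perm (Fin n))
    (hσ : ∀ τ : Equiv.Perm (Fin n),
      Finset.univ.sup' Finset.univ_nonempty (fun i => t0 i + t1 (σ i))
        ≤ Finset.univ.sup' Finset.univ_nonempty (fun i => t0 i + t1 (τ i)))
    (k : Fin n)
    (hk : t1 (σ k) = Finset.univ.sup' Finset.univ_nonempty (fun j => t1 (σ j))) :
    Finset.univ.sup' Finset.univ_nonempty
        (fun i => t0 i + t1 (σ (Equiv.swap (0 : Fin n) k i)))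
      = Finset.univ.sup' Finset.univ_nonempty (fun i => t0 i + t1 (σ i)) := by
  apply le_antisymm
  · apply Finset.sup'_le
    intro i _
    have hmax : ∀ j : Fin n, t1 (σ j) ≤ t1 (σ k) := by
      intro j
      rw [hk]
      exact Finset.le_sup' (fun j => t1 (σ j)) (Finset.mem_univ j)
    by_cases h0i : i = 0
    · subst h0i
      rw [Equiv.swap_apply_left]
      calc t0 0 + t1 (σ k) ≤ t0 k + t1 (σ k) := by
            exact add_le_add_left (h0 k.zero_le) _
        _ ≤ _ := Finset.le_sup' (fun i => t0 i + t1 (σ i)) (Finset.mem_univ k)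
    · by_cases hik : i = k
      · subst hik
        rw [Equiv.swap_apply_right]
        calc t0 i + t1 (σ 0) ≤ t0 i + t1 (σ i) := add_le_add_right (hmax 0) _
          _ ≤ _ := Finset.le_sup' (fun i => t0 i + t1 (σ i)) (Finset.mem_univ i)
      · rw [Equiv.swap_apply_of_ne_of_ne h0i hik]
        exact Finset.le_sup' (fun i => t0 i + t1 (σ i)) (Finset.mem_univ i)
  · simpa [Equiv.Perm.mul_apply] using hσ (σ * Equiv.swap 0 k)
end
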